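/- Let f be an entire function of infinite order. Then, writing A(r) = max_{|z|=r} Re f(z), one has liminf_{r→∞} (log A(r))/(log r) = +∞. (Consequently exp∘f has infinite lower order.) -/

import Mathlib

open Filter

/-- Maximum modulus of `f` on the circle `|z| = r`. -/
noncomputable def maxMod (f : ℂ → ℂ) (r : ℝ) : ℝ :=
  sSup ((fun z => ‖f z‖) '' Metric.sphere (0 : ℂ) r)

/-- Maximum of `Re f` on the circle `|z| = r`. -/
noncomputable def maxRe (f : ℂ → ℂ) (r : ℝ) : ℝ :=
  sSup ((fun z => (f z).re) '' Metric.sphere (0 : ℂ) r)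

section BorelCaratheodoryAux

open Metric Set
open scoped NNReal ENNReal

variable {f : ℂ → ℂ}


lemma abs_le_maxMod (hf : Continuous f) {z : ℂ} {r : ℝ} (hz : z ∈ Metric.sphere (0:ℂ) r) :
    ‖f z‖ ≤ maxMod f r :=
  le_csSup (((isCompact_sphere (0:ℂ) r).image (continuous_norm.comp hf)).bddAbove) ⟨z, hz, rfl⟩

lemma re_le_maxRe (hf : Continuous f) {z : ℂ} {r : ℝ} (hz : z ∈ Metric.sphere (0:ℂ) r) :
    (f z).re ≤ maxRe f r :=
  le_csSup (((isCompact_sphere (0:ℂ) r).image (Complex.continuous_re.comp hf)).bddAbove) ⟨z, hz, rfl⟩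

lemma norm_le_maxMod_of_le (hf : Differentiable ℂ f) {z : ℂ} {r : ℝ} (hr : 0 < r)
    (hz : ‖z‖ ≤ r) : ‖f z‖ ≤ maxMod f r := by
  apply Complex.norm_le_of_forall_mem_frontier_norm_le (U := Metric.closedBall (0:ℂ) r)
    isBounded_closedBall hf.diffContOnCl (C := maxMod f r)
  · intro w hw
    rw [frontier_closedBall (0:ℂ) hr.ne'] at hw
    exact abs_le_maxMod hf.continuous hw
  · rw [Metric.closure_closedBall]
    simpa [Metric.mem_closedBall, dist_zero_right] using hz

lemma re_le_maxRe_of_le (hf : Differentiable ℂ f) {z : ℂ} {r : ℝ} (hr : 0 < r)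
    (hz : ‖z‖ ≤ r) : (f z).re ≤ maxRe f r := by
  have h : ‖Complex.exp (f z)‖ ≤ Real.exp (maxRe f r) := by
    apply Complex.norm_le_of_forall_mem_frontier_norm_le (U := Metric.closedBall (0:ℂ) r)
      isBounded_closedBall ((Complex.differentiable_exp.comp hf).diffContOnCl)
      (C := Real.exp (maxRe f r))
    · intro w hw
      rw [frontier_closedBall (0:ℂ) hr.ne'] at hw
      rw [Function.comp_apply, Complex.norm_exp]
      exact Real.exp_le_exp.mpr (re_le_maxRe hf.continuous hw)
    · rw [Metric.closure_closedBall]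
      simpa [Metric.mem_closedBall, dist_zero_right] using hz
  rw [Complex.norm_exp] at h
  exact Real.exp_le_exp.mp h

lemma maxMod_nonneg (hf : Continuous f) {r : ℝ} (hr : 0 ≤ r) : 0 ≤ maxMod f r := by
  obtain ⟨z, hz⟩ := (NormedSpace.sphere_nonempty (x := (0:ℂ)) (r := r)).mpr hr
  exact le_trans (norm_nonneg _) (abs_le_maxMod hf hz)



lemma bc_aux (hf : Differentiable ℂ f) {s B : ℝ} (hs : 0 < s) (hB : 0 ≤ B)
    (hre : ∀ w : ℂ, ‖w‖ ≤ 2*s → (f w).re - (f 0).re ≤ B) {z : ℂ} (hz : ‖z‖ = s) :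
    ‖f z - f 0‖ ≤ 2 * B := by
  refine le_of_forall_pos_le_add fun ε hε => ?_
  obtain ⟨B', hB'⟩ : ∃ B' : ℝ, B' = B + ε/2 := ⟨_, rfl⟩
  have hB'pos : (0:ℝ) < B' := by rw [hB']; positivity
  have hreF : ∀ w ∈ ball (0:ℂ) (2*s), (f w - f 0).re ≤ B := by
    intro w hw
    have h1 : ‖w‖ ≤ 2*s := (mem_ball_zero_iff.mp hw).le
    have := hre w h1
    simpa [Complex.sub_re] using this
  have hdne : ∀ w ∈ ball (0:ℂ) (2*s), (2*(B':ℂ) - (f w - f 0)) ≠ 0 := by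
    intro w hw h0
    have h1 := congrArg Complex.re h0
    simp [Complex.sub_re, Complex.mul_re] at h1
    have h2 := hreF w hw
    rw [Complex.sub_re] at h2
    linarith
  have hgd : DifferentiableOn ℂ (fun w => (f w - f 0) / (2*(B':ℂ) - (f w - f 0)))
      (ball (0:ℂ) (2*s)) := by
    apply DifferentiableOn.div ((hf.sub_const _).differentiableOn)
    · exact ((differentiable_const _).sub (hf.sub_const _)).differentiableOn
    · exact hdne
  have hg0 : (fun w => (f w - f 0) / (2*(B':ℂ) - (f w - f 0))) 0 = 0 := by simp
  have hkey : ∀ w ∈ ball (0:ℂ) (2*s), ‖f w - f 0‖ < ‖2*(B':ℂ) - (f w - f 0)‖ := by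
    intro w hw
    have h2 := hreF w hw
    have e1 : ‖f w - f 0‖^2 = (f w - f 0).re^2 + (f w - f 0).im^2 := by
      rw [Complex.sq_norm, Complex.normSq_apply]; ring
    have e2 : ‖2*(B':ℂ) - (f w - f 0)‖^2
        = (2*B' - (f w - f 0).re)^2 + (f w - f 0).im^2 := by
      rw [Complex.sq_norm, Complex.normSq_apply]
      simp [Complex.sub_re, Complex.sub_im, Complex.mul_re, Complex.mul_im]
      ring
    have hsq : ‖f w - f 0‖^2 < ‖2*(B':ℂ) - (f w - f 0)‖^2 := by
      rw [e1, e2]; nlinarith [hB'pos, hε]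
    nlinarith [norm_nonneg (f w - f 0), norm_nonneg (2*(B':ℂ) - (f w - f 0))]
  have hmaps : MapsTo (fun w => (f w - f 0) / (2*(B':ℂ) - (f w - f 0)))
      (ball (0:ℂ) (2*s))
      (ball ((fun w => (f w - f 0) / (2*(B':ℂ) - (f w - f 0))) 0) 1) := by
    intro w hw
    rw [hg0, mem_ball_zero_iff]
    have h := hkey w hw
    have hdpos : 0 < ‖2*(B':ℂ) - (f w - f 0)‖ := lt_of_le_of_lt (norm_nonneg _) h
    rw [norm_div, div_lt_one hdpos]
    exact h
  have hzball : z ∈ ball (0:ℂ) (2*s) := by rw [mem_ball_zero_iff, hz]; linarith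
  have hschwarz := Complex.dist_le_div_mul_dist_of_mapsTo_ball hgd (hmaps.mono_right ball_subset_closedBall) hzball
  rw [sub_self, zero_div, dist_zero_right, dist_zero_right, hz] at hschwarz
  obtain ⟨G, hG⟩ : ∃ G : ℂ, G = (f z - f 0) / (2*(B':ℂ) - (f z - f 0)) := ⟨_, rfl⟩
  rw [← hG] at hschwarz
  have hgz : ‖G‖ ≤ 1/2 := by
    refine hschwarz.trans ?_
    rw [div_mul_eq_mul_div, one_mul, div_le_div_iff₀ (by positivity) (by norm_num)]
    linarith
  have hdz := hdne z hzball
  have hcancel : G * (2*(B':ℂ) - (f z - f 0)) = f z - f 0 := by rw [hG]; exact div_mul_cancel₀ _ hdz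
  have hrel : (f z - f 0) * (1 + G) = 2*(B':ℂ) * G := by linear_combination -hcancel
  have h1g : (1:ℝ)/2 ≤ ‖1 + G‖ := by
    have h := norm_sub_le (1 + G) G
    simp only [add_sub_cancel_right, norm_one] at h
    linarith
  have hBnorm : ‖(2*(B':ℂ))‖ = 2*B' := by
    rw [norm_mul, Complex.norm_real, Real.norm_eq_abs,
      abs_of_nonneg hB'pos.le]
    simp
  have hnorm : ‖f z - f 0‖ * ‖1 + G‖ = 2*B' * ‖G‖ := by
    rw [← norm_mul, hrel, norm_mul, hBnorm]
  have hmain : ‖f z - f 0‖ * (1/2) ≤ 2*B' * (1/2) := by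
    calc ‖f z - f 0‖ * (1/2) ≤ ‖f z - f 0‖ * ‖1 + G‖ :=
          mul_le_mul_of_nonneg_left h1g (norm_nonneg _)
    _ = 2*B' * ‖G‖ := hnorm
    _ ≤ 2*B' * (1/2) := mul_le_mul_of_nonneg_left hgz (by positivity)
  have : ‖f z - f 0‖ ≤ 2*B' := by linarith
  rw [hB'] at this
  linarith

-- Borel–Carathéodory consequence: bound on the sphere of radius r/2
lemma sphere_bound (hf : Differentiable ℂ f) {r : ℝ} (hr : 0 < r) {z : ℂ}
    (hz : ‖z‖ = r/2) : ‖f z‖ ≤ 3*‖f 0‖ + 2*maxRe f r := by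
  have hs : (0:ℝ) < r/2 := by linarith
  have hB : 0 ≤ maxRe f r - (f 0).re := by
    have := re_le_maxRe_of_le hf hr (by simp [hr.le] : ‖(0:ℂ)‖ ≤ r)
    linarith
  have hre : ∀ w : ℂ, ‖w‖ ≤ 2*(r/2) → (f w).re - (f 0).re ≤ maxRe f r - (f 0).re := by
    intro w hw
    have : ‖w‖ ≤ r := by linarith
    have := re_le_maxRe_of_le hf hr this
    linarith
  have h := bc_aux hf hs hB hre hz
  have h2 : ‖f z‖ ≤ ‖f z - f 0‖ + ‖f 0‖ := by
    calc ‖f z‖ = ‖f z - f 0 + f 0‖ := by ring_nf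
    _ ≤ ‖f z - f 0‖ + ‖f 0‖ := norm_add_le _ _
  have h3 : -(f 0).re ≤ ‖f 0‖ := by
    have := Complex.abs_re_le_norm (f 0)
    cases abs_le.mp this; linarith
  linarith

lemma poly_bound (hf : Differentiable ℂ f) (N : ℕ)
    (hfreq : ∃ᶠ r in atTop, maxRe f r ≤ r^N) :
    ∃ C : ℝ, 0 ≤ C ∧ ∀ z : ℂ, 1 ≤ ‖z‖ → ‖f z‖ ≤ C * ‖z‖^N := by
  set p := cauchyPowerSeries f 0 ((1:ℝ≥0):ℝ) with hp
  have h1 : HasFPowerSeriesOnBall f p 0 ⊤ := hf.hasFPowerSeriesOnBall 0 one_pos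
  -- coefficient bound from a sphere bound
  have hcb : ∀ (t : ℝ), 0 < t → ∀ D : ℝ, (∀ z : ℂ, ‖z‖ = t → ‖f z‖ ≤ D) →
      ∀ n : ℕ, ‖p n‖ ≤ D / t^n := by
    intro t ht D hD n
    have hD0 : 0 ≤ D := le_trans (norm_nonneg _) (hD _ (by simp [abs_of_pos ht] : ‖(t:ℂ)‖ = t))
    have hR : (0:ℝ≥0) < t.toNNReal := by simp [Real.toNNReal_pos, ht]
    have hpe : p = cauchyPowerSeries f 0 ((t.toNNReal : ℝ≥0) : ℝ) :=
      h1.hasFPowerSeriesAt.eq_formalMultilinearSeries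
        (hf.hasFPowerSeriesOnBall 0 hR).hasFPowerSeriesAt
    have hcoe : ((t.toNNReal : ℝ≥0) : ℝ) = t := Real.coe_toNNReal _ ht.le
    rw [hpe, hcoe]
    have hb := norm_cauchyPowerSeries_le f 0 t n
    have hint : (∫ θ : ℝ in (0)..2 * Real.pi, ‖f (circleMap 0 t θ)‖) ≤ 2 * Real.pi * D := by
      have hle : ∀ θ ∈ Set.uIcc (0:ℝ) (2*Real.pi), ‖f (circleMap 0 t θ)‖ ≤ D := by
        intro θ _
        exact hD _ (by simp [abs_of_pos ht])
      calc (∫ θ : ℝ in (0)..2 * Real.pi, ‖f (circleMap 0 t θ)‖)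
          ≤ ∫ _ : ℝ in (0)..2 * Real.pi, D :=
            intervalIntegral.integral_mono_on Real.two_pi_pos.le
              (((hf.continuous.comp (continuous_circleMap 0 t)).norm).intervalIntegrable _ _)
              intervalIntegrable_const
              (fun θ _ => hD _ (by simp [abs_of_pos ht]))
      _ = 2 * Real.pi * D := by simp [mul_comm]
    calc ‖cauchyPowerSeries f 0 t n‖
        ≤ ((2 * Real.pi)⁻¹ * ∫ θ : ℝ in (0)..2 * Real.pi, ‖f (circleMap 0 t θ)‖) * |t|⁻¹ ^ n :=
          norm_cauchyPowerSeries_le f 0 t n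
    _ ≤ ((2 * Real.pi)⁻¹ * (2 * Real.pi * D)) * |t|⁻¹ ^ n := by
          apply mul_le_mul_of_nonneg_right
          · exact mul_le_mul_of_nonneg_left hint (by positivity)
          · positivity
    _ = D / t^n := by
          rw [abs_of_pos ht]
          field_simp
          rw [one_div, inv_pow, inv_mul_cancel_right₀ (by positivity)]
  -- vanishing of high coefficients
  have hvanish : ∀ n : ℕ, N < n → p n = 0 := by
    intro n hn
    have hnorm : ∀ ε : ℝ, 0 < ε → ‖p n‖ ≤ ε := by
      intro ε hε
      set c : ℝ := (3*‖f 0‖ + 2) * 2^N with hc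
      have hc0 : 0 < c := by positivity
      obtain ⟨r, h1r, h2r⟩ :=
        (hfreq.and_eventually (eventually_ge_atTop (max 2 (2*c/ε)))).exists
      have hr2 : 2 ≤ r := le_trans (le_max_left _ _) h2r
      have hrc : 2*c/ε ≤ r := le_trans (le_max_right _ _) h2r
      have hrpos : 0 < r := by linarith
      have ht : (0:ℝ) < r/2 := by linarith
      have hD : ∀ z : ℂ, ‖z‖ = r/2 → ‖f z‖ ≤ 3*‖f 0‖ + 2*(r^N) := by
        intro z hz
        have := sphere_bound hf hrpos hz
        have h2 : maxRe f r ≤ r^N := h1r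
        linarith
      have hb := hcb (r/2) ht _ hD n
      -- now  3‖f0‖ + 2 r^N ≤ c * (r/2)^N  and (r/2)^n ≥ (r/2)^N * (r/2)
      have ht1 : (1:ℝ) ≤ r/2 := by linarith
      have htN : (1:ℝ) ≤ (r/2)^N := one_le_pow₀ ht1
      have hDc : 3*‖f 0‖ + 2*(r^N) ≤ c * (r/2)^N := by
        have : r^N = 2^N * (r/2)^N := by
          rw [← mul_pow]; congr 1; field_simp
        rw [this, hc]
        have h2N : (1:ℝ) ≤ 2^N := one_le_pow₀ (by norm_num)
        have hf0 : (0:ℝ) ≤ 3*‖f 0‖ := by positivity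
        have hprod : (1:ℝ) ≤ 2^N*(r/2)^N := by nlinarith
        nlinarith [mul_nonneg hf0 (sub_nonneg.mpr hprod)]
      have hpow : (r/2)^N * (r/2) ≤ (r/2)^n := by
        calc (r/2)^N * (r/2) = (r/2)^(N+1) := by ring
        _ ≤ (r/2)^n := pow_le_pow_right₀ ht1 hn
      have hfin : (3*‖f 0‖ + 2*(r^N)) / (r/2)^n ≤ ε := by
        have e1 : (3*‖f 0‖ + 2*(r^N)) / (r/2)^n ≤ (c * (r/2)^N) / (r/2)^n := by
          gcongr
        have e2 : (c * (r/2)^N) / (r/2)^n ≤ (c * (r/2)^N) / ((r/2)^N * (r/2)) := by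
          gcongr
        have e3 : (c * (r/2)^N) / ((r/2)^N * (r/2)) = 2*c/r := by
          have hne : ((r:ℝ)/2)^N ≠ 0 := by positivity
          field_simp
        have e4 : 2*c/r ≤ ε := by
          rw [div_le_iff₀ hrpos]
          rw [div_le_iff₀ hε] at hrc
          linarith
        linarith
      exact le_trans hb hfin
    have : ‖p n‖ ≤ 0 := le_of_forall_pos_le_add (fun ε hε => by simpa using hnorm ε hε)
    exact norm_le_zero_iff.mp this
  have hc0 : ∀ n : ℕ, N < n → p.coeff n = 0 := by
    intro n hn
    rw [FormalMultilinearSeries.coeff, hvanish n hn]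
    simp
  have hsum : ∀ z : ℂ, HasSum (fun n => z^n • p.coeff n) (f z) := by
    intro z
    have hmem : z ∈ Metric.eball (0:ℂ) ⊤ := by simp
    have := h1.hasSum hmem
    simp only [FormalMultilinearSeries.apply_eq_pow_smul_coeff, zero_add] at this
    exact this
  have hfin : ∀ z : ℂ, f z = ∑ n ∈ Finset.range (N+1), z^n • p.coeff n := by
    intro z
    refine (hsum z).unique (hasSum_sum_of_ne_finset_zero ?_)
    intro n hn
    have hnN : N < n := by
      have := Finset.mem_range.not.mp hn
      omega
    rw [hc0 n hnN, smul_zero]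
  refine ⟨∑ n ∈ Finset.range (N+1), ‖p.coeff n‖, Finset.sum_nonneg fun _ _ => norm_nonneg _, ?_⟩
  intro z h1z
  rw [hfin z]
  calc ‖∑ n ∈ Finset.range (N+1), z^n • p.coeff n‖
      ≤ ∑ n ∈ Finset.range (N+1), ‖z^n • p.coeff n‖ := norm_sum_le _ _
  _ ≤ ∑ n ∈ Finset.range (N+1), ‖p.coeff n‖ * ‖z‖^N := by
      apply Finset.sum_le_sum
      intro n hn
      rw [norm_smul, norm_pow, mul_comm]
      exact mul_le_mul_of_nonneg_left
        (pow_le_pow_right₀ h1z (Nat.lt_succ_iff.mp (Finset.mem_range.mp hn))) (norm_nonneg _)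
  _ = (∑ n ∈ Finset.range (N+1), ‖p.coeff n‖) * ‖z‖^N := by rw [Finset.sum_mul]

end BorelCaratheodoryAux

section Main
open Metric Set
open scoped NNReal ENNReal

/-- If `f` is entire of infinite order then `liminf (log A(r))/(log r) = +∞`,
where `A(r) = max_{|z|=r} Re f(z)`. -/
theorem infinite_order_liminf_maxRe (f : ℂ → ℂ) (hf : Differentiable ℂ f)
    (hord : limsup (fun r : ℝ =>
        ((Real.log (Real.log (maxMod f r)) / Real.log r : ℝ) : EReal)) atTop = ⊤) :
    liminf (fun r : ℝ => ((Real.log (maxRe f r) / Real.log r : ℝ) : EReal)) atTop = ⊤ := by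
  by_contra h
  have hlt : liminf (fun r : ℝ =>
      ((Real.log (maxRe f r) / Real.log r : ℝ) : EReal)) atTop < ⊤ := Ne.lt_top h
  obtain ⟨K, hK1, -⟩ := EReal.lt_iff_exists_real_btwn.mp hlt
  have hfreq0 : ∃ᶠ r in atTop,
      ((Real.log (maxRe f r) / Real.log r : ℝ) : EReal) < (K : EReal) :=
    frequently_lt_of_liminf_lt (by isBoundedDefault) hK1
  set N : ℕ := ⌈K⌉₊ + 1 with hN
  have hKN : K ≤ N := by
    calc K ≤ (⌈K⌉₊ : ℝ) := Nat.le_ceil K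
    _ ≤ (N : ℝ) := by exact_mod_cast Nat.le_succ _
  have hfreq : ∃ᶠ r in atTop, maxRe f r ≤ r^N := by
    apply (hfreq0.and_eventually (eventually_ge_atTop 2)).mono
    rintro r ⟨hltK, hr2⟩
    have hrpos : (0:ℝ) < r := by linarith
    have hlr : 0 < Real.log r := Real.log_pos (by linarith)
    have hltK' : Real.log (maxRe f r) / Real.log r < K := by exact_mod_cast hltK
    have hlog : Real.log (maxRe f r) < K * Real.log r := (div_lt_iff₀ hlr).mp hltK'
    rcases le_or_gt (maxRe f r) 0 with h0 | h0
    · exact le_trans h0 (by positivity)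
    · have hlt2 : Real.log (maxRe f r) < Real.log (r^N) := by
        rw [Real.log_pow]
        calc Real.log (maxRe f r) < K * Real.log r := hlog
        _ ≤ N * Real.log r := mul_le_mul_of_nonneg_right hKN hlr.le
      have := Real.exp_lt_exp.mpr hlt2
      rw [Real.exp_log h0, Real.exp_log (by positivity)] at this
      exact this.le
  obtain ⟨C, hC0, hCb⟩ := poly_bound hf N hfreq
  have hM : ∀ r : ℝ, 1 ≤ r → maxMod f r ≤ (C+1) * r^N := by
    intro r hr
    apply csSup_le (((NormedSpace.sphere_nonempty (x := (0:ℂ)) (r := r)).mpr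
      (by linarith)).image _)
    rintro x ⟨z, hz, rfl⟩
    have hzn : ‖z‖ = r := by simpa using hz
    have h1 : ‖f z‖ ≤ C * ‖z‖^N := hCb z (by rw [hzn]; exact hr)
    rw [hzn] at h1
    have hrN : (0:ℝ) ≤ r^N := by positivity
    calc ‖f z‖ = ‖f z‖ := rfl
    _ ≤ C * r^N := h1
    _ ≤ (C+1) * r^N := by nlinarith
  -- eventual bound on the limsup quantity
  have hev' : ∀ᶠ r in atTop, (fun r : ℝ =>
      ((Real.log (Real.log (maxMod f r)) / Real.log r : ℝ) : EReal)) r ≤ (1 : EReal) := by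
    by_cases hbig : ∃ z : ℂ, 1 < ‖f z‖
    · obtain ⟨z₀, hz₀⟩ := hbig
      have hev1 : ∀ᶠ r in atTop, Real.log (C+1) + N * Real.log r ≤ r := by
        have h1 : ∀ᶠ r : ℝ in atTop, ‖(N:ℝ) * Real.log r‖ ≤ 1/2 * ‖r‖ :=
          (Real.isLittleO_log_id_atTop.const_mul_left (N:ℝ)).bound (by norm_num)
        filter_upwards [h1, eventually_ge_atTop (max 0 (2*Real.log (C+1)))] with r hr1 hr2
        have hr0 : 0 ≤ r := le_trans (le_max_left _ _) hr2
        have hlC : Real.log (C+1) ≤ r/2 := by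
          have := le_trans (le_max_right _ _) hr2
          linarith
        rw [Real.norm_eq_abs, Real.norm_eq_abs, abs_of_nonneg hr0] at hr1
        have := le_trans (le_abs_self _) hr1
        linarith
      filter_upwards [hev1, eventually_ge_atTop (max 2 (max 1 ‖z₀‖))] with r hr1 hr2
      have hr2' : 2 ≤ r := le_trans (le_max_left _ _) hr2
      have hrz : ‖z₀‖ ≤ r := le_trans (le_max_of_le_right (le_max_right _ _)) hr2
      have hr1' : 1 ≤ r := by linarith
      have hrpos : 0 < r := by linarith
      have hlr : 0 < Real.log r := Real.log_pos (by linarith)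
      have hMr : 1 < maxMod f r := lt_of_lt_of_le hz₀ (norm_le_maxMod_of_le hf hrpos hrz)
      have hlogM : 0 < Real.log (maxMod f r) := Real.log_pos hMr
      have hup : Real.log (maxMod f r) ≤ Real.log (C+1) + N * Real.log r := by
        have h1 : Real.log (maxMod f r) ≤ Real.log ((C+1) * r^N) :=
          Real.log_le_log (by linarith) (hM r hr1')
        rwa [Real.log_mul (by linarith) (by positivity), Real.log_pow] at h1
      have hupr : Real.log (maxMod f r) ≤ r := le_trans hup hr1
      have houter : Real.log (Real.log (maxMod f r)) ≤ Real.log r :=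
        Real.log_le_log hlogM hupr
      have : Real.log (Real.log (maxMod f r)) / Real.log r ≤ 1 :=
        (div_le_one hlr).mpr houter
      exact_mod_cast EReal.coe_le_coe_iff.mpr this
    · push_neg at hbig
      have hb : Bornology.IsBounded (Set.range f) := by
        refine (isBounded_iff_forall_norm_le (s := Set.range f)).mpr ⟨1, ?_⟩
        rintro x ⟨z, rfl⟩; exact hbig z
      have hconst : ∀ z : ℂ, f z = f 0 := fun z => hf.apply_eq_apply_of_bounded hb z 0
      have hMc : ∀ r : ℝ, 0 ≤ r → maxMod f r = ‖f 0‖ := by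
        intro r hr
        have himg : (fun z => ‖f z‖) '' Metric.sphere (0:ℂ) r
            = {‖f 0‖} := by
          apply Set.eq_singleton_iff_nonempty_unique_mem.mpr
          constructor
          · exact (((NormedSpace.sphere_nonempty (x := (0:ℂ)) (r := r)).mpr hr)).image _
          · rintro x ⟨z, hz, rfl⟩
            show ‖f z‖ = ‖f 0‖
            rw [hconst z]
        rw [maxMod, himg, csSup_singleton]
      set a : ℝ := Real.log (Real.log ‖f 0‖) with ha
      filter_upwards [eventually_ge_atTop (max 2 (Real.exp |a|))] with r hr
      have hr2 : 2 ≤ r := le_trans (le_max_left _ _) hr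
      have hre : Real.exp |a| ≤ r := le_trans (le_max_right _ _) hr
      have hlr : 0 < Real.log r := Real.log_pos (by linarith)
      have hla : |a| ≤ Real.log r := by
        have := Real.log_le_log (Real.exp_pos _) hre
        rwa [Real.log_exp] at this
      rw [hMc r (by linarith)]
      have : a / Real.log r ≤ 1 := (div_le_one hlr).mpr ((le_abs_self a).trans hla)
      exact_mod_cast EReal.coe_le_coe_iff.mpr this
  have hle : limsup (fun r : ℝ =>
      ((Real.log (Real.log (maxMod f r)) / Real.log r : ℝ) : EReal)) atTop ≤ (1:EReal) :=
    limsup_le_of_le (by isBoundedDefault) hev'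
  rw [hord] at hle
  exact absurd (top_le_iff.mp hle) (by exact_mod_cast EReal.coe_ne_top 1)

end Main
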